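/- The first-order correction of the generalized row sum rating at ε = 0 is the opponent adjustment −L·s: lim_{ε → 0⁺} (x(ε) − s)/ε = −L·s. -/

import Mathlib

open Matrix Finset

/-- The Laplacian matrix of the matches matrix `M`:
`L i j = -M i j` for `i ≠ j` and `L i i = ∑_{j ≠ i} M i j`. -/
def lap {n : ℕ} (M : Matrix (Fin n) (Fin n) ℝ) : Matrix (Fin n) (Fin n) ℝ :=
  Matrix.of fun i j => if i = j then ∑ k ∈ Finset.univ.erase i, M i k else -M i j

/-- The first-order correction of the generalized row sum rating at `ε = 0` is the
opponent adjustment `-L s`: `lim_{ε → 0⁺} (x(ε) - s)/ε = -L s`. -/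
theorem grs_first_order_correction
    (n : ℕ) (hn : 1 ≤ n) (M : Matrix (Fin n) (Fin n) ℝ)
    (hsymm : M.IsSymm) (hnonneg : ∀ i j, 0 ≤ M i j) (hdiag : ∀ i, M i i = 0)
    (s : Fin n → ℝ) (x : ℝ → (Fin n → ℝ))
    (hx : ∀ ε : ℝ, 0 < ε → (1 + ε • lap M) *ᵥ x ε = s) :
    Filter.Tendsto (fun ε : ℝ => ε⁻¹ • (x ε - s)) (nhdsWithin 0 (Set.Ioi 0))
      (nhds (-(lap M *ᵥ s))) := by
  set L := lap M with hL
  set A : ℝ → Matrix (Fin n) (Fin n) ℝ := fun ε => 1 + ε • L with hA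
  have hAcont : Continuous A := by
    apply continuous_const.add
    exact continuous_id.smul continuous_const
  have hdetcont : Continuous fun ε => (A ε).det := hAcont.matrix_det
  have hadjcont : Continuous fun ε => (A ε).adjugate := hAcont.matrix_adjugate
  have hA0 : A 0 = 1 := by simp [hA]
  have hdet0 : (A 0).det = 1 := by rw [hA0]; simp
  -- eventually det ≠ 0 near 0
  have hne : ∀ᶠ ε in nhds (0:ℝ), (A ε).det ≠ 0 := by
    have : ∀ᶠ ε in nhds (0:ℝ), (A ε).det ∈ ({0}ᶜ : Set ℝ) := by
      apply hdetcont.continuousAt.preimage_mem_nhds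
      rw [hdet0]
      exact (isOpen_compl_singleton).mem_nhds (by norm_num)
    exact this
  -- x ε → s as ε → 0⁺
  have hxlim : Filter.Tendsto x (nhdsWithin 0 (Set.Ioi 0)) (nhds s) := by
    have hform : Filter.Tendsto (fun ε => ((A ε).det)⁻¹ • ((A ε).adjugate *ᵥ s))
        (nhdsWithin 0 (Set.Ioi 0)) (nhds s) := by
      have h1 : Filter.Tendsto (fun ε => ((A ε).det)⁻¹) (nhds (0:ℝ)) (nhds 1) := by
        have := (hdetcont.continuousAt (x := (0:ℝ))).inv₀ (by rw [hdet0]; norm_num)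
        simpa [hdet0, Pi.inv_def] using this.tendsto
      have h2 : Filter.Tendsto (fun ε => (A ε).adjugate *ᵥ s) (nhds (0:ℝ)) (nhds s) := by
        have := (hadjcont.matrix_mulVec (continuous_const : Continuous fun _ : ℝ => s)).continuousAt (x := (0:ℝ))
        simpa [hA0, Matrix.adjugate_one] using this.tendsto
      have := h1.smul h2
      simpa using this.mono_left nhdsWithin_le_nhds
    refine hform.congr' ?_
    filter_upwards [self_mem_nhdsWithin,
      hne.filter_mono nhdsWithin_le_nhds] with ε hε hdε
    have hεpos : (0:ℝ) < ε := hε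
    have hinv : Invertible (A ε) := (A ε).invertibleOfIsUnitDet (isUnit_iff_ne_zero.mpr hdε)
    have hxeq : x ε = (A ε)⁻¹ *ᵥ s := by
      rw [← hx ε hεpos]
      rw [Matrix.mulVec_mulVec, Matrix.nonsing_inv_mul _ (isUnit_iff_ne_zero.mpr hdε),
        Matrix.one_mulVec]
    rw [hxeq, Matrix.inv_def, Ring.inverse_eq_inv', Matrix.smul_mulVec]
  -- ε⁻¹ • (x ε - s) = -(L *ᵥ x ε) for ε > 0
  have hmain : Filter.Tendsto (fun ε => -(L *ᵥ x ε)) (nhdsWithin 0 (Set.Ioi 0))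
      (nhds (-(L *ᵥ s))) := by
    have hmv : Continuous fun v : Fin n → ℝ => -(L *ᵥ v) :=
      (continuous_const.matrix_mulVec continuous_id).neg
    exact (hmv.continuousAt.tendsto).comp hxlim
  refine hmain.congr' ?_
  filter_upwards [self_mem_nhdsWithin] with ε hε
  have hεpos : (0:ℝ) < ε := hε
  have h := hx ε hεpos
  have hexp : x ε + ε • (L *ᵥ x ε) = s := by
    rw [← h, Matrix.add_mulVec, Matrix.one_mulVec, Matrix.smul_mulVec]
  have : x ε - s = -(ε • (L *ᵥ x ε)) := by
    rw [← hexp]; abel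
  rw [this, smul_neg, smul_smul, inv_mul_cancel₀ hεpos.ne', one_smul]
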